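/- arXiv:2202.13748 — 4 statements merged into one kernel-verified Lean document; each statement's English description precedes it below -/
import Mathlib

section
/- Let α₁, α₂, α₃ ∈ ℝ and define τ²(w) = α₁²(w₁−w₂)(w₃−w₁) + α₂²(w₂−w₃)(w₁−w₂) + α₃²(w₃−w₁)(w₂−w₃) for w = (w₁,w₂,w₃) ∈ ℝ³. Define the vector fields on ℝ³: X₁(w) = (1,1,1), X₂(w) = (w₁,w₂,w₃), and X₃(w) = (−(w₃w₂ − w₁(w₃+w₂) + τ²(w)), −(w₁w₃ − w₂(w₁+w₃) + τ²(w)), −(w₂w₁ − w₃(w₂+w₁) + τ²(w))). Then at every point of ℝ³ the Lie brackets satisfy [X₁,X₂] = X₁, [X₁,X₃] = 2X₂, and [X₂,X₃] = X₃; in particular X₁, X₂, X₃ span a Lie algebra of vector fields isomorphic to 𝔰𝔩₂ (the Vessiot–Guldberg Lie algebra of the generalised Darboux–Brioschi–Halphen system). -/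
/-- The pointwise Lie bracket of two vector fields on (an open subset of) ℝⁿ,
    `[V,W](p) = (DW)(p)(V(p)) − (DV)(p)(W(p))`. -/
noncomputable def vbracket {n : ℕ} (V W : (Fin n → ℝ) → (Fin n → ℝ)) :
    (Fin n → ℝ) → (Fin n → ℝ) :=
  fun p => fderiv ℝ W p (V p) - fderiv ℝ V p (W p)

/-- The function τ² of the generalised Darboux–Brioschi–Halphen system. -/
def tauSq (α₁ α₂ α₃ : ℝ) (w : Fin 3 → ℝ) : ℝ :=
  α₁ ^ 2 * (w 0 - w 1) * (w 2 - w 0) + α₂ ^ 2 * (w 1 - w 2) * (w 0 - w 1) +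
    α₃ ^ 2 * (w 2 - w 0) * (w 1 - w 2)

def dbhX₁ : (Fin 3 → ℝ) → (Fin 3 → ℝ) := fun _ => ![1, 1, 1]

def dbhX₂ : (Fin 3 → ℝ) → (Fin 3 → ℝ) := fun w => ![w 0, w 1, w 2]

def dbhX₃ (α₁ α₂ α₃ : ℝ) : (Fin 3 → ℝ) → (Fin 3 → ℝ) := fun w =>
  ![-(w 2 * w 1 - w 0 * (w 2 + w 1) + tauSq α₁ α₂ α₃ w),
    -(w 0 * w 2 - w 1 * (w 0 + w 2) + tauSq α₁ α₂ α₃ w),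
    -(w 1 * w 0 - w 2 * (w 1 + w 0) + tauSq α₁ α₂ α₃ w)]

section Aux
open ContinuousLinearMap

noncomputable def pr (i : Fin 3) : (Fin 3 → ℝ) →L[ℝ] ℝ := proj i

lemma hpr (i : Fin 3) (p : Fin 3 → ℝ) : HasFDerivAt (fun w : Fin 3 → ℝ => w i) (pr i) p :=
  hasFDerivAt_apply i p

lemma pr_apply (i : Fin 3) (v : Fin 3 → ℝ) : pr i v = v i := rfl

lemma tau_hd (α₁ α₂ α₃ : ℝ) (p : Fin 3 → ℝ) :
    ∃ L : (Fin 3 → ℝ) →L[ℝ] ℝ, HasFDerivAt (tauSq α₁ α₂ α₃) L p ∧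
      ∀ v, L v = α₁^2*((v 0 - v 1)*(p 2 - p 0)+(p 0 - p 1)*(v 2 - v 0)) +
        α₂^2*((v 1 - v 2)*(p 0 - p 1)+(p 1 - p 2)*(v 0 - v 1)) +
        α₃^2*((v 2 - v 0)*(p 1 - p 2)+(p 2 - p 0)*(v 1 - v 2)) := by
  have h01 : HasFDerivAt (fun w : Fin 3 → ℝ => w 0 - w 1) (pr 0 - pr 1) p :=
    (hpr 0 p).sub (hpr 1 p)
  have h12 : HasFDerivAt (fun w : Fin 3 → ℝ => w 1 - w 2) (pr 1 - pr 2) p :=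
    (hpr 1 p).sub (hpr 2 p)
  have h20 : HasFDerivAt (fun w : Fin 3 → ℝ => w 2 - w 0) (pr 2 - pr 0) p :=
    (hpr 2 p).sub (hpr 0 p)
  have H := (((h01.const_mul (α₁^2)).mul h20).add ((h12.const_mul (α₂^2)).mul h01)).add
      ((h20.const_mul (α₃^2)).mul h12)
  refine ⟨_, H, fun v => ?_⟩
  simp only [ContinuousLinearMap.add_apply, ContinuousLinearMap.smul_apply,
    ContinuousLinearMap.sub_apply, pr_apply, smul_eq_mul]
  ring

lemma X3_eval (α₁ α₂ α₃ : ℝ) (p v : Fin 3 → ℝ) :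
    fderiv ℝ (dbhX₃ α₁ α₂ α₃) p v =
      ![-(v 2 * p 1 + p 2 * v 1 - (v 0 * (p 2 + p 1) + p 0 * (v 2 + v 1)) +
          (α₁^2*((v 0 - v 1)*(p 2 - p 0)+(p 0 - p 1)*(v 2 - v 0)) +
           α₂^2*((v 1 - v 2)*(p 0 - p 1)+(p 1 - p 2)*(v 0 - v 1)) +
           α₃^2*((v 2 - v 0)*(p 1 - p 2)+(p 2 - p 0)*(v 1 - v 2)))),
        -(v 0 * p 2 + p 0 * v 2 - (v 1 * (p 0 + p 2) + p 1 * (v 0 + v 2)) +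
          (α₁^2*((v 0 - v 1)*(p 2 - p 0)+(p 0 - p 1)*(v 2 - v 0)) +
           α₂^2*((v 1 - v 2)*(p 0 - p 1)+(p 1 - p 2)*(v 0 - v 1)) +
           α₃^2*((v 2 - v 0)*(p 1 - p 2)+(p 2 - p 0)*(v 1 - v 2)))),
        -(v 1 * p 0 + p 1 * v 0 - (v 2 * (p 1 + p 0) + p 2 * (v 1 + v 0)) +
          (α₁^2*((v 0 - v 1)*(p 2 - p 0)+(p 0 - p 1)*(v 2 - v 0)) +
           α₂^2*((v 1 - v 2)*(p 0 - p 1)+(p 1 - p 2)*(v 0 - v 1)) +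
           α₃^2*((v 2 - v 0)*(p 1 - p 2)+(p 2 - p 0)*(v 1 - v 2))))] := by
  obtain ⟨Lτ, hτ, hτv⟩ := tau_hd α₁ α₂ α₃ p
  have H0 := ((((hpr 2 p).mul (hpr 1 p)).sub ((hpr 0 p).mul ((hpr 2 p).add (hpr 1 p)))).add hτ).neg
  have H1 := ((((hpr 0 p).mul (hpr 2 p)).sub ((hpr 1 p).mul ((hpr 0 p).add (hpr 2 p)))).add hτ).neg
  have H2 := ((((hpr 1 p).mul (hpr 0 p)).sub ((hpr 2 p).mul ((hpr 1 p).add (hpr 0 p)))).add hτ).neg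
  have hdiff : DifferentiableAt ℝ (dbhX₃ α₁ α₂ α₃) p := by
    rw [differentiableAt_pi]
    intro i
    fin_cases i
    · exact H0.differentiableAt
    · exact H1.differentiableAt
    · exact H2.differentiableAt
  funext i
  have hi := hasFDerivAt_pi'.1 hdiff.hasFDerivAt i
  fin_cases i
  · have e0 := congrFun (congrArg DFunLike.coe (hi.unique H0)) v
    simp only [ContinuousLinearMap.coe_comp', Function.comp_apply,
      ContinuousLinearMap.proj_apply, ContinuousLinearMap.neg_apply,
      ContinuousLinearMap.add_apply, ContinuousLinearMap.sub_apply,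
      ContinuousLinearMap.smul_apply, pr_apply, smul_eq_mul, hτv, Pi.add_apply] at e0
    rw [e0]
    simp only [Fin.mk_zero, Matrix.cons_val_zero]
    ring
  · have e1 := congrFun (congrArg DFunLike.coe (hi.unique H1)) v
    simp only [ContinuousLinearMap.coe_comp', Function.comp_apply,
      ContinuousLinearMap.proj_apply, ContinuousLinearMap.neg_apply,
      ContinuousLinearMap.add_apply, ContinuousLinearMap.sub_apply,
      ContinuousLinearMap.smul_apply, pr_apply, smul_eq_mul, hτv, Pi.add_apply] at e1
    rw [e1]
    simp only [Fin.mk_one, Matrix.cons_val_one, Matrix.head_cons, Matrix.cons_val_zero]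
    ring
  · have e2 := congrFun (congrArg DFunLike.coe (hi.unique H2)) v
    simp only [ContinuousLinearMap.coe_comp', Function.comp_apply,
      ContinuousLinearMap.proj_apply, ContinuousLinearMap.neg_apply,
      ContinuousLinearMap.add_apply, ContinuousLinearMap.sub_apply,
      ContinuousLinearMap.smul_apply, pr_apply, smul_eq_mul, hτv, Pi.add_apply] at e2
    rw [e2]
    simp only [show ((⟨2, by norm_num⟩ : Fin 3)) = 2 from rfl, Matrix.cons_val_two, Matrix.tail_cons, Matrix.head_cons]
    ring

end Aux

/-- The vector fields X₁, X₂, X₃ of the generalised Darboux–Brioschi–Halphen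
system satisfy the 𝔰𝔩₂ commutation relations
[X₁,X₂] = X₁, [X₁,X₃] = 2X₂, [X₂,X₃] = X₃ at every point of ℝ³. -/
theorem dbh_sl2_commutation_relations (α₁ α₂ α₃ : ℝ) :
    ∀ p : Fin 3 → ℝ,
      vbracket dbhX₁ dbhX₂ p = dbhX₁ p ∧
      vbracket dbhX₁ (dbhX₃ α₁ α₂ α₃) p = (2 : ℝ) • dbhX₂ p ∧
      vbracket dbhX₂ (dbhX₃ α₁ α₂ α₃) p = dbhX₃ α₁ α₂ α₃ p := by
  have hX2id : dbhX₂ = _root_.id := by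
    funext w i; fin_cases i <;> rfl
  intro p
  have h1 : fderiv ℝ dbhX₁ p = 0 := fderiv_const_apply _
  have h2 : fderiv ℝ dbhX₂ p = ContinuousLinearMap.id ℝ _ := by
    rw [hX2id]; exact fderiv_id
  refine ⟨?_, ?_, ?_⟩
  · simp [vbracket, h1, h2]
  · simp only [vbracket, h1, ContinuousLinearMap.zero_apply, sub_zero]
    rw [show dbhX₁ p = ![1,1,1] from rfl, X3_eval]
    funext i; fin_cases i <;> · simp [dbhX₂]; ring
  · simp only [vbracket, h2, ContinuousLinearMap.coe_id', id_eq]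
    rw [show dbhX₂ p = ![p 0, p 1, p 2] from rfl, X3_eval]
    funext i; fin_cases i <;> · simp [dbhX₃, tauSq]; ring
end

section
/- Define the following vector fields on ℝ⁵ with coordinates (x₁,…,x₅): X₁ = (1,0,0,0,0), X₂(x) = (0,1,x₁,x₁²,2x₁x₂), X₃(x) = (0,0,1,2x₁,2x₂), X₄ = (0,0,0,1,0), X₅ = (0,0,0,0,1). Then at every point of ℝ⁵ the Lie brackets satisfy [X₁,X₂] = X₃, [X₁,X₃] = 2X₄, [X₂,X₃] = 2X₅, and all the remaining brackets [Xᵢ,Xⱼ] for 1 ≤ i < j ≤ 5 vanish; in particular X₁,…,X₅ span a 5-dimensional nilpotent Lie algebra of vector fields (the Vessiot–Guldberg Lie algebra of the control system of Example 3.4). -/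
/-- The vector fields X₁,…,X₅ of the control system on ℝ⁵ (indexed by `Fin 5`). -/
def ctrlX : Fin 5 → (Fin 5 → ℝ) → (Fin 5 → ℝ) :=
  ![fun _ => ![1, 0, 0, 0, 0],
    fun x => ![0, 1, x 0, (x 0) ^ 2, 2 * x 0 * x 1],
    fun x => ![0, 0, 1, 2 * x 0, 2 * x 1],
    fun _ => ![0, 0, 0, 1, 0],
    fun _ => ![0, 0, 0, 0, 1]]

open ContinuousLinearMap

noncomputable def L2 (p : Fin 5 → ℝ) : (Fin 5 → ℝ) →L[ℝ] (Fin 5 → ℝ) :=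
  pi ![0, 0, proj 0, (2 * p 0) • proj 0, (2 * p 1) • proj 0 + (2 * p 0) • proj 1]
noncomputable def L3 : (Fin 5 → ℝ) →L[ℝ] (Fin 5 → ℝ) :=
  pi ![0, 0, 0, (2 : ℝ) • proj 0, (2 : ℝ) • proj 1]
lemma hX1 (p : Fin 5 → ℝ) : HasFDerivAt (ctrlX 1) (L2 p) p := by
  rw [hasFDerivAt_pi']
  intro i
  fin_cases i
  · simp only [ctrlX, L2, proj_pi, Matrix.cons_val_zero, Matrix.cons_val_one, Matrix.head_cons]
    exact hasFDerivAt_const _ _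
  · simp only [ctrlX, L2, proj_pi, Matrix.cons_val_zero, Matrix.cons_val_one, Matrix.head_cons]
    exact hasFDerivAt_const _ _
  · simp only [ctrlX, L2, proj_pi, Matrix.cons_val_zero, Matrix.cons_val_one, Matrix.head_cons,
      Matrix.cons_val_two, Matrix.tail_cons]
    exact (proj 0 : (Fin 5 → ℝ) →L[ℝ] ℝ).hasFDerivAt
  · simp only [ctrlX, L2, proj_pi, Matrix.cons_val_zero, Matrix.cons_val_one, Matrix.head_cons,
      Matrix.cons_val_three, Matrix.tail_cons, Fin.reduceFinMk, Matrix.cons_val]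
    have h := ((proj 0 : (Fin 5 → ℝ) →L[ℝ] ℝ).hasFDerivAt (x := p)).mul
      ((proj 0 : (Fin 5 → ℝ) →L[ℝ] ℝ).hasFDerivAt (x := p))
    convert h using 1
    · rfl
    · ext x; simp [sq]
    · ext v; simp; ring
  · simp only [ctrlX, L2, proj_pi, Matrix.cons_val_zero, Matrix.cons_val_one, Matrix.head_cons,
      Matrix.cons_val_four, Matrix.tail_cons, Fin.reduceFinMk, Matrix.cons_val]
    have h := (((proj 0 : (Fin 5 → ℝ) →L[ℝ] ℝ).hasFDerivAt (x := p)).const_mul 2).mul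
      ((proj 1 : (Fin 5 → ℝ) →L[ℝ] ℝ).hasFDerivAt (x := p))
    convert h using 1
    · rfl
    · ext x; rfl
    ext v; simp; ring
lemma hX2 (p : Fin 5 → ℝ) : HasFDerivAt (ctrlX 2) L3 p := by
  rw [hasFDerivAt_pi']
  intro i
  fin_cases i
  · simp only [ctrlX, L3, proj_pi, Matrix.cons_val_zero, Matrix.cons_val_one, Matrix.head_cons,
      Matrix.cons_val_two, Matrix.tail_cons]
    exact hasFDerivAt_const _ _
  · simp only [ctrlX, L3, proj_pi, Matrix.cons_val_zero, Matrix.cons_val_one, Matrix.head_cons,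
      Matrix.cons_val_two, Matrix.tail_cons]
    exact hasFDerivAt_const _ _
  · simp only [ctrlX, L3, proj_pi, Matrix.cons_val_zero, Matrix.cons_val_one, Matrix.head_cons,
      Matrix.cons_val_two, Matrix.tail_cons]
    exact hasFDerivAt_const _ _
  · simp only [ctrlX, L3, proj_pi, Matrix.cons_val_zero, Matrix.cons_val_one, Matrix.head_cons,
      Matrix.cons_val_three, Matrix.tail_cons, Fin.reduceFinMk, Matrix.cons_val]
    have h := ((proj 0 : (Fin 5 → ℝ) →L[ℝ] ℝ).hasFDerivAt (x := p)).const_mul 2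
    convert h using 1
    · rfl
    · ext x; rfl
  · simp only [ctrlX, L3, proj_pi, Matrix.cons_val_zero, Matrix.cons_val_one, Matrix.head_cons,
      Matrix.cons_val_four, Matrix.tail_cons, Fin.reduceFinMk, Matrix.cons_val]
    have h := ((proj 1 : (Fin 5 → ℝ) →L[ℝ] ℝ).hasFDerivAt (x := p)).const_mul 2
    convert h using 1
    · rfl
    · ext x; rfl


lemma hXc0 (p : Fin 5 → ℝ) :
    HasFDerivAt (ctrlX 0) (0 : (Fin 5 → ℝ) →L[ℝ] (Fin 5 → ℝ)) p :=
  hasFDerivAt_const ![1, 0, 0, 0, 0] p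

lemma hXc3 (p : Fin 5 → ℝ) :
    HasFDerivAt (ctrlX 3) (0 : (Fin 5 → ℝ) →L[ℝ] (Fin 5 → ℝ)) p :=
  hasFDerivAt_const ![0, 0, 0, 1, 0] p

lemma hXc4 (p : Fin 5 → ℝ) :
    HasFDerivAt (ctrlX 4) (0 : (Fin 5 → ℝ) →L[ℝ] (Fin 5 → ℝ)) p :=
  hasFDerivAt_const ![0, 0, 0, 0, 1] p


/-- The control-system vector fields satisfy [X₁,X₂] = X₃, [X₁,X₃] = 2X₄,
[X₂,X₃] = 2X₅ and all remaining brackets [Xᵢ,Xⱼ] (i < j) vanish, at every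
point of ℝ⁵: they span a 5-dimensional nilpotent Lie algebra. -/
theorem control_system_nilpotent_commutation_relations :
    ∀ p : Fin 5 → ℝ,
      vbracket (ctrlX 0) (ctrlX 1) p = ctrlX 2 p ∧
      vbracket (ctrlX 0) (ctrlX 2) p = (2 : ℝ) • ctrlX 3 p ∧
      vbracket (ctrlX 1) (ctrlX 2) p = (2 : ℝ) • ctrlX 4 p ∧
      (∀ i j : Fin 5, i < j →
        (i, j) ≠ ((0 : Fin 5), (1 : Fin 5)) →
        (i, j) ≠ ((0 : Fin 5), (2 : Fin 5)) →
        (i, j) ≠ ((1 : Fin 5), (2 : Fin 5)) →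
        vbracket (ctrlX i) (ctrlX j) p = 0) := by
  intro p
  have f0 : fderiv ℝ (ctrlX 0) p = 0 := (hXc0 p).fderiv
  have f3 : fderiv ℝ (ctrlX 3) p = 0 := (hXc3 p).fderiv
  have f4 : fderiv ℝ (ctrlX 4) p = 0 := (hXc4 p).fderiv
  have f1 : fderiv ℝ (ctrlX 1) p = L2 p := (hX1 p).fderiv
  have f2 : fderiv ℝ (ctrlX 2) p = L3 := (hX2 p).fderiv
  refine ⟨?_, ?_, ?_, ?_⟩
  · show fderiv ℝ (ctrlX 1) p (ctrlX 0 p) - fderiv ℝ (ctrlX 0) p (ctrlX 1 p) = ctrlX 2 p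
    rw [f0, f1]
    simp only [zero_apply, sub_zero]
    funext k
    fin_cases k <;> simp [L2, ctrlX, pi_apply, Matrix.vecHead, Matrix.vecTail] <;> ring
  · show fderiv ℝ (ctrlX 2) p (ctrlX 0 p) - fderiv ℝ (ctrlX 0) p (ctrlX 2 p) = (2:ℝ) • ctrlX 3 p
    rw [f0, f2]
    simp only [zero_apply, sub_zero]
    funext k
    fin_cases k <;> simp [L3, ctrlX, pi_apply, Matrix.vecHead, Matrix.vecTail] <;> ring
  · show fderiv ℝ (ctrlX 2) p (ctrlX 1 p) - fderiv ℝ (ctrlX 1) p (ctrlX 2 p) = (2:ℝ) • ctrlX 4 p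
    rw [f1, f2]
    funext k
    fin_cases k <;> simp [L2, L3, ctrlX, pi_apply, Matrix.vecHead, Matrix.vecTail] <;> ring
  · intro i j hij h01 h02 h12
    have e13 : vbracket (ctrlX 1) (ctrlX 3) p = 0 := by
      show fderiv ℝ (ctrlX 3) p (ctrlX 1 p) - fderiv ℝ (ctrlX 1) p (ctrlX 3 p) = 0
      rw [f1, f3]
      funext k
      fin_cases k <;> simp [L2, ctrlX, pi_apply, Matrix.vecHead, Matrix.vecTail]
    have e14 : vbracket (ctrlX 1) (ctrlX 4) p = 0 := by
      show fderiv ℝ (ctrlX 4) p (ctrlX 1 p) - fderiv ℝ (ctrlX 1) p (ctrlX 4 p) = 0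
      rw [f1, f4]
      funext k
      fin_cases k <;> simp [L2, ctrlX, pi_apply, Matrix.vecHead, Matrix.vecTail]
    have e23 : vbracket (ctrlX 2) (ctrlX 3) p = 0 := by
      show fderiv ℝ (ctrlX 3) p (ctrlX 2 p) - fderiv ℝ (ctrlX 2) p (ctrlX 3 p) = 0
      rw [f2, f3]
      funext k
      fin_cases k <;> simp [L3, ctrlX, pi_apply, Matrix.vecHead, Matrix.vecTail]
    have e24 : vbracket (ctrlX 2) (ctrlX 4) p = 0 := by
      show fderiv ℝ (ctrlX 4) p (ctrlX 2 p) - fderiv ℝ (ctrlX 2) p (ctrlX 4 p) = 0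
      rw [f2, f4]
      funext k
      fin_cases k <;> simp [L3, ctrlX, pi_apply, Matrix.vecHead, Matrix.vecTail]
    have e03 : vbracket (ctrlX 0) (ctrlX 3) p = 0 := by
      show fderiv ℝ (ctrlX 3) p (ctrlX 0 p) - fderiv ℝ (ctrlX 0) p (ctrlX 3 p) = 0
      rw [f0, f3]; simp
    have e04 : vbracket (ctrlX 0) (ctrlX 4) p = 0 := by
      show fderiv ℝ (ctrlX 4) p (ctrlX 0 p) - fderiv ℝ (ctrlX 0) p (ctrlX 4 p) = 0
      rw [f0, f4]; simp
    have e34 : vbracket (ctrlX 3) (ctrlX 4) p = 0 := by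
      show fderiv ℝ (ctrlX 4) p (ctrlX 3 p) - fderiv ℝ (ctrlX 3) p (ctrlX 4 p) = 0
      rw [f3, f4]; simp
    fin_cases i <;> fin_cases j <;>
      first
        | exact absurd hij (by decide)
        | exact absurd rfl h01
        | exact absurd rfl h02
        | exact absurd rfl h12
        | exact e03 | exact e04 | exact e13 | exact e14
        | exact e23 | exact e24 | exact e34
end

section
/- For all c₁, c₂ ∈ ℝ, the curves x̄(t) = (2c₂ − 1)(1 + cosh(t + 2c₁)) + sinh(t + 2c₁) and ā(t) = (1 − e^{2c₁ + t})/(e^{2c₁ + t} + 1) are differentiable on ℝ and satisfy, for every t ∈ ℝ, the reduced Schwarz system dx̄/dt = 1 − x̄(t)ā(t) and dā/dt = (ā(t)² − 1)/2; moreover |ā(t)| < 1 for all t. -/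
/-- For all c₁, c₂ ∈ ℝ, the curves
x̄(t) = (2c₂ − 1)(1 + cosh(t + 2c₁)) + sinh(t + 2c₁) and
ā(t) = (1 − e^{2c₁+t})/(e^{2c₁+t} + 1)
are differentiable and solve the reduced Schwarz system
dx̄/dt = 1 − x̄ā, dā/dt = (ā² − 1)/2, with |ā(t)| < 1 for all t. -/
theorem schwarz_reduced_solutions_inside (c₁ c₂ : ℝ) :
    let xbar : ℝ → ℝ := fun t =>
      (2 * c₂ - 1) * (1 + Real.cosh (t + 2 * c₁)) + Real.sinh (t + 2 * c₁)
    let abar : ℝ → ℝ := fun t =>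
      (1 - Real.exp (2 * c₁ + t)) / (Real.exp (2 * c₁ + t) + 1)
    ∀ t : ℝ,
      HasDerivAt xbar (1 - xbar t * abar t) t ∧
      HasDerivAt abar ((abar t ^ 2 - 1) / 2) t ∧
      |abar t| < 1 := by
  intro xbar abar t
  have hE : Real.exp (2 * c₁ + t) > 0 := Real.exp_pos _
  have hden : Real.exp (2 * c₁ + t) + 1 ≠ 0 := by positivity
  -- derivative of inner functions
  have hid1 : HasDerivAt (fun s : ℝ => s + 2 * c₁) 1 t := by
    simpa using (hasDerivAt_id t).add_const (2 * c₁)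
  have hid2 : HasDerivAt (fun s : ℝ => 2 * c₁ + s) 1 t := by
    simpa using (hasDerivAt_id t).const_add (2 * c₁)
  have hcosh : HasDerivAt (fun s : ℝ => Real.cosh (s + 2 * c₁))
      (Real.sinh (t + 2 * c₁)) t := by
    simpa [Function.comp_def] using (Real.hasDerivAt_cosh (t + 2 * c₁)).comp t hid1
  have hsinh : HasDerivAt (fun s : ℝ => Real.sinh (s + 2 * c₁))
      (Real.cosh (t + 2 * c₁)) t := by
    simpa [Function.comp_def] using (Real.hasDerivAt_sinh (t + 2 * c₁)).comp t hid1
  have hexp : HasDerivAt (fun s : ℝ => Real.exp (2 * c₁ + s))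
      (Real.exp (2 * c₁ + t)) t := by
    simpa [Function.comp_def] using (Real.hasDerivAt_exp (2 * c₁ + t)).comp t hid2
  set E := Real.exp (2 * c₁ + t) with hEdef
  refine ⟨?_, ?_, ?_⟩
  · have h1 : HasDerivAt xbar
        ((2 * c₂ - 1) * Real.sinh (t + 2 * c₁) + Real.cosh (t + 2 * c₁)) t := by
      exact (((hcosh.const_add 1).const_mul (2 * c₂ - 1)).add hsinh)
    have heq : (2 * c₂ - 1) * Real.sinh (t + 2 * c₁) + Real.cosh (t + 2 * c₁)
        = 1 - xbar t * abar t := by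
      simp only [xbar, abar, Real.cosh_eq, Real.sinh_eq]
      have h2 : Real.exp (t + 2 * c₁) = E := by rw [hEdef, add_comm]
      have h3 : Real.exp (-(t + 2 * c₁)) = E⁻¹ := by
        rw [Real.exp_neg, h2]
      rw [h2, h3]
      field_simp
      ring
    exact heq ▸ h1
  · have h1 : HasDerivAt abar
        (((-E) * (E + 1) - (1 - E) * E) / (E + 1) ^ 2) t := by
      exact ((hexp.const_sub 1).div (hexp.add_const 1) hden)
    have heq : ((-E) * (E + 1) - (1 - E) * E) / (E + 1) ^ 2
        = ((abar t) ^ 2 - 1) / 2 := by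
      simp only [abar, ← hEdef]
      field_simp
      ring
    exact heq ▸ h1
  · have : |1 - E| < E + 1 := by
      rw [abs_lt]; constructor <;> nlinarith
    calc |abar t| = |1 - E| / (E + 1) := by
          simp only [abar, ← hEdef, abs_div, abs_of_pos (by positivity : E + 1 > 0)]
      _ < 1 := by rw [div_lt_one (by positivity)]; exact this
end

section
/- For all c₁, c₂ ∈ ℝ and all t ∈ ℝ with t ≠ −2c₁, the curves x̄(t) = −1 − 2c₂ + c₂ e^{t + 2c₁} + (1 + c₂) e^{−t − 2c₁} and ā(t) = (1 + e^{2c₁ + t})/(1 − e^{2c₁ + t}) satisfy the reduced Schwarz system dx̄/dt = 1 − x̄(t)ā(t) and dā/dt = (ā(t)² − 1)/2; moreover |ā(t)| > 1 for all such t. -/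
/-- For all c₁, c₂ ∈ ℝ and all t ≠ −2c₁, the curves
x̄(t) = −1 − 2c₂ + c₂ e^{t+2c₁} + (1 + c₂) e^{−t−2c₁} and
ā(t) = (1 + e^{2c₁+t})/(1 − e^{2c₁+t})
solve the reduced Schwarz system dx̄/dt = 1 − x̄ā, dā/dt = (ā² − 1)/2,
with |ā(t)| > 1 for all such t. -/
theorem schwarz_reduced_solutions_outside (c₁ c₂ : ℝ) :
    let xbar : ℝ → ℝ := fun t =>
      -1 - 2 * c₂ + c₂ * Real.exp (t + 2 * c₁) + (1 + c₂) * Real.exp (-t - 2 * c₁)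
    let abar : ℝ → ℝ := fun t =>
      (1 + Real.exp (2 * c₁ + t)) / (1 - Real.exp (2 * c₁ + t))
    ∀ t : ℝ, t ≠ -2 * c₁ →
      HasDerivAt xbar (1 - xbar t * abar t) t ∧
      HasDerivAt abar ((abar t ^ 2 - 1) / 2) t ∧
      |abar t| > 1 := by
  intro xbar abar t ht
  have hu1 : Real.exp (2 * c₁ + t) ≠ 1 := by
    rw [Ne, Real.exp_eq_one_iff]
    intro h; apply ht; linarith
  have hden : 1 - Real.exp (2 * c₁ + t) ≠ 0 := sub_ne_zero.mpr (Ne.symm hu1)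
  have hupos : 0 < Real.exp (2 * c₁ + t) := Real.exp_pos _
  have hinv : Real.exp (-t - 2 * c₁) = (Real.exp (2 * c₁ + t))⁻¹ := by
    rw [← Real.exp_neg]; ring_nf
  have h1 : HasDerivAt (fun s : ℝ => s + 2 * c₁) 1 t := (hasDerivAt_id t).add_const _
  have h2 : HasDerivAt (fun s : ℝ => Real.exp (s + 2 * c₁)) (Real.exp (t + 2 * c₁)) t := by
    simpa using h1.exp
  have h3 : HasDerivAt (fun s : ℝ => -s - 2 * c₁) (-1) t := by
    simpa using ((hasDerivAt_id t).neg.sub_const (2 * c₁))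
  have h4 : HasDerivAt (fun s : ℝ => Real.exp (-s - 2 * c₁))
      (-Real.exp (-t - 2 * c₁)) t := by
    simpa using h3.exp
  have hx : HasDerivAt xbar
      (c₂ * Real.exp (t + 2 * c₁) - (1 + c₂) * Real.exp (-t - 2 * c₁)) t := by
    have this : HasDerivAt (fun y : ℝ => -1 - 2 * c₂ + c₂ * Real.exp (y + 2 * c₁) +
        (1 + c₂) * Real.exp (-y - 2 * c₁))
        (0 + c₂ * Real.exp (t + 2 * c₁) + (1 + c₂) * -Real.exp (-t - 2 * c₁)) t :=
      ((hasDerivAt_const t (-1 - 2 * c₂)).add (h2.const_mul c₂)).add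
      (h4.const_mul (1 + c₂))
    convert this using 1
    ring
  have h5 : HasDerivAt (fun s : ℝ => 2 * c₁ + s) 1 t := by
    simpa using (hasDerivAt_id t).const_add (2 * c₁)
  have h6 : HasDerivAt (fun s : ℝ => Real.exp (2 * c₁ + s)) (Real.exp (2 * c₁ + t)) t := by
    simpa using h5.exp
  have h7 : HasDerivAt (fun s : ℝ => 1 + Real.exp (2 * c₁ + s)) (Real.exp (2 * c₁ + t)) t :=
    h6.const_add 1
  have h8 : HasDerivAt (fun s : ℝ => 1 - Real.exp (2 * c₁ + s)) (-Real.exp (2 * c₁ + t)) t :=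
    h6.const_sub 1
  have ha : HasDerivAt abar
      ((Real.exp (2 * c₁ + t) * (1 - Real.exp (2 * c₁ + t)) -
        (1 + Real.exp (2 * c₁ + t)) * -Real.exp (2 * c₁ + t)) /
        (1 - Real.exp (2 * c₁ + t)) ^ 2) t := h7.div h8 hden
  have hexp : Real.exp (t + 2 * c₁) = Real.exp (2 * c₁ + t) := by ring_nf
  refine ⟨?_, ?_, ?_⟩
  · convert hx using 1
    show (1 : ℝ) - (-1 - 2 * c₂ + c₂ * Real.exp (t + 2 * c₁) +
        (1 + c₂) * Real.exp (-t - 2 * c₁)) *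
        ((1 + Real.exp (2 * c₁ + t)) / (1 - Real.exp (2 * c₁ + t))) = _
    rw [hexp, hinv]
    field_simp
    ring
  · convert ha using 1
    show ((((1 + Real.exp (2 * c₁ + t)) / (1 - Real.exp (2 * c₁ + t))) ^ 2 - 1) / 2) = _
    field_simp
    ring
  · show 1 < |(1 + Real.exp (2 * c₁ + t)) / (1 - Real.exp (2 * c₁ + t))|
    rw [abs_div, lt_div_iff₀ (abs_pos.mpr hden), one_mul]
    nlinarith [sq_abs (1 - Real.exp (2 * c₁ + t)), sq_abs (1 + Real.exp (2 * c₁ + t)),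
      abs_nonneg (1 - Real.exp (2 * c₁ + t)), abs_nonneg (1 + Real.exp (2 * c₁ + t)), hupos]
end
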